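/- Let 0 < p₁ < p₄, ρ > 0, and set a := p₄/p₁ > 1. Let D, R, I : ℝ → ℝ be differentiable functions satisfying D' = 2p₁·I·D, R' = 2p₁·I·R - 2p₄ρ·I, I' = -2p₁(D² + R²) + 2p₄ρ·R on ℝ, with D(0)² + R(0)² + I(0)² = ρ², and assume (D(0),R(0),I(0)) is not one of the two fixed points (±ρ√(1 - 1/a²), ρ/a, 0). Set M := √((aρ - R(0))² - (a² - 1)·D(0)²). Then there exists τ₀ ∈ (-π, π] with τ₀·I(0) ≥ 0 and (a² - 1)ρ / (a(aρ - R(0)) - M·cos(τ₀)) = 1 such that for all τ ∈ ℝ: D(τ) = (a² - 1)ρ·D(0) / (a(aρ - R(0)) - M·cos(2p₁ρ√(a²-1)·τ - τ₀)), R(τ) = aρ + (a² - 1)ρ·(R(0) - aρ) / (a(aρ - R(0)) - M·cos(2p₁ρ√(a²-1)·τ - τ₀)), and I(τ) = -ρ√(a²-1)·M·sin(2p₁ρ√(a²-1)·τ - τ₀) / (a(aρ - R(0)) - M·cos(2p₁ρ√(a²-1)·τ - τ₀)). -/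

import Mathlib

private lemma osc_zero (ω : ℝ) (hω : 0 < ω) (w w' : ℝ → ℝ)
    (hw : ∀ x, HasDerivAt w (w' x) x)
    (hw' : ∀ x, HasDerivAt w' (-(ω ^ 2) * w x) x)
    (h0 : w 0 = 0) (h0' : w' 0 = 0) : ∀ x, w x = 0 ∧ w' x = 0 := by
  intro x
  have hE : ∀ y, HasDerivAt (fun τ => w' τ ^ 2 + ω ^ 2 * w τ ^ 2) 0 y := by
    intro y
    have h1 := ((hw' y).pow 2).add (((hw y).pow 2).const_mul (ω ^ 2))
    refine HasDerivAt.congr_deriv h1 (Eq.symm ?_)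
    push_cast
    ring
  have hEx := is_const_of_deriv_eq_zero (fun y => (hE y).differentiableAt)
    (fun y => (hE y).deriv) x 0
  simp only [h0, h0'] at hEx
  have hE0 : w' x ^ 2 + ω ^ 2 * w x ^ 2 = 0 := by simpa using hEx
  have hω2 : 0 < ω ^ 2 := by positivity
  constructor
  · have h2 : w x ^ 2 = 0 := by nlinarith [sq_nonneg (w' x), sq_nonneg (w x)]
    exact pow_eq_zero_iff (n := 2) (by norm_num) |>.mp h2
  · have h2 : w' x ^ 2 = 0 := by nlinarith [sq_nonneg (w' x), sq_nonneg (w x)]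
    exact pow_eq_zero_iff (n := 2) (by norm_num) |>.mp h2

set_option maxHeartbeats 1000000 in
/-- Case 6 (combination of p₁- and p₄-components), regime p₁ < p₄:
explicit (periodic) solution. -/
theorem stmt_6 (p₁ p₄ ρ : ℝ) (hp₁ : 0 < p₁) (hp : p₁ < p₄) (hρ : 0 < ρ)
    (a : ℝ) (ha : a = p₄ / p₁) (D R I : ℝ → ℝ)
    (hD : ∀ τ, HasDerivAt D (2 * p₁ * I τ * D τ) τ)
    (hR : ∀ τ, HasDerivAt R (2 * p₁ * I τ * R τ - 2 * p₄ * ρ * I τ) τ)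
    (hI : ∀ τ, HasDerivAt I (-(2 * p₁ * (D τ ^ 2 + R τ ^ 2)) + 2 * p₄ * ρ * R τ) τ)
    (hsphere : D 0 ^ 2 + R 0 ^ 2 + I 0 ^ 2 = ρ ^ 2)
    (hne₁ : (D 0, R 0, I 0) ≠ (ρ * Real.sqrt (1 - 1 / a ^ 2), ρ / a, 0))
    (hne₂ : (D 0, R 0, I 0) ≠ (-(ρ * Real.sqrt (1 - 1 / a ^ 2)), ρ / a, 0))
    (M : ℝ) (hM : M = Real.sqrt ((a * ρ - R 0) ^ 2 - (a ^ 2 - 1) * D 0 ^ 2)) :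
    ∃ τ₀ ∈ Set.Ioc (-Real.pi) Real.pi, τ₀ * I 0 ≥ 0 ∧
      (a ^ 2 - 1) * ρ / (a * (a * ρ - R 0) - M * Real.cos τ₀) = 1 ∧
      ∀ τ : ℝ,
        D τ = (a ^ 2 - 1) * ρ * D 0
                / (a * (a * ρ - R 0)
                    - M * Real.cos (2 * p₁ * ρ * Real.sqrt (a ^ 2 - 1) * τ - τ₀)) ∧
        R τ = a * ρ + (a ^ 2 - 1) * ρ * (R 0 - a * ρ)
                / (a * (a * ρ - R 0)
                    - M * Real.cos (2 * p₁ * ρ * Real.sqrt (a ^ 2 - 1) * τ - τ₀)) ∧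
        I τ = -(ρ * Real.sqrt (a ^ 2 - 1) * M
                  * Real.sin (2 * p₁ * ρ * Real.sqrt (a ^ 2 - 1) * τ - τ₀))
                / (a * (a * ρ - R 0)
                    - M * Real.cos (2 * p₁ * ρ * Real.sqrt (a ^ 2 - 1) * τ - τ₀)) := by
  have hp₄ : 0 < p₄ := hp₁.trans hp
  have ha1 : 1 < a := by rw [ha, lt_div_iff₀ hp₁]; linarith
  have hC : 0 < a ^ 2 - 1 := by nlinarith
  set s := Real.sqrt (a ^ 2 - 1) with hsdef
  have hs2 : s ^ 2 = a ^ 2 - 1 := Real.sq_sqrt hC.le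
  have hspos : 0 < s := Real.sqrt_pos.mpr hC
  have hap : p₄ = a * p₁ := by rw [ha]; field_simp
  have hIdiff : Differentiable ℝ I := fun τ => (hI τ).differentiableAt
  have hIcont : Continuous I := hIdiff.continuous
  have hden : ρ * (a ^ 2 - 1) ≠ 0 := by positivity
  -- choice of τ₀
  have hMM : (a * ρ - R 0) ^ 2 - (a ^ 2 - 1) * D 0 ^ 2 = (ρ - a * R 0) ^ 2 + (s * I 0) ^ 2 := by
    linear_combination (-(a ^ 2 - 1)) * hsphere - I 0 ^ 2 * hs2
  have hMsq : M ^ 2 = (ρ - a * R 0) ^ 2 + (s * I 0) ^ 2 := by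
    rw [hM, hMM]; exact Real.sq_sqrt (by positivity)
  have hM0 : 0 ≤ M := hM ▸ Real.sqrt_nonneg _
  have hMne : M ≠ 0 := by
    intro h0
    rw [h0] at hMsq
    have h1 : ρ - a * R 0 = 0 := by nlinarith [sq_nonneg (ρ - a * R 0), sq_nonneg (s * I 0)]
    have h2 : s * I 0 = 0 := by nlinarith [sq_nonneg (ρ - a * R 0), sq_nonneg (s * I 0)]
    have hane : a ≠ 0 := by linarith
    have hI0 : I 0 = 0 := by
      rcases mul_eq_zero.mp h2 with h3 | h3
      · exact absurd h3 hspos.ne'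
      · exact h3
    have hR0 : R 0 = ρ / a := by field_simp; linarith
    have hsq1 : (ρ * Real.sqrt (1 - 1 / a ^ 2)) ^ 2 = ρ ^ 2 * (1 - 1 / a ^ 2) := by
      rw [mul_pow, Real.sq_sqrt]
      have h4 : 1 / a ^ 2 < 1 := by
        rw [div_lt_one (by positivity)]; nlinarith
      linarith
    have hD0sq : D 0 ^ 2 = (ρ * Real.sqrt (1 - 1 / a ^ 2)) ^ 2 := by
      rw [hsq1]
      have h5 : R 0 ^ 2 = ρ ^ 2 / a ^ 2 := by rw [hR0]; field_simp
      have h6 : ρ ^ 2 * (1 - 1 / a ^ 2) = ρ ^ 2 - ρ ^ 2 / a ^ 2 := by field_simp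
      rw [h6]
      nlinarith [hsphere]
    have hfac : (D 0 - ρ * Real.sqrt (1 - 1 / a ^ 2))
        * (D 0 + ρ * Real.sqrt (1 - 1 / a ^ 2)) = 0 := by
      nlinarith [hD0sq]
    rcases mul_eq_zero.mp hfac with hcase | hcase
    · exact hne₁ (by rw [show D 0 = ρ * Real.sqrt (1 - 1 / a ^ 2) by linarith, hR0, hI0])
    · exact hne₂ (by rw [show D 0 = -(ρ * Real.sqrt (1 - 1 / a ^ 2)) by linarith, hR0, hI0])
  have hMpos : 0 < M := lt_of_le_of_ne hM0 (Ne.symm hMne)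
  set z : ℂ := ((ρ - a * R 0 : ℝ) : ℂ) + ((s * I 0 : ℝ) : ℂ) * Complex.I with hzdef
  have habs : ‖z‖ = M := by
    rw [hzdef, Complex.norm_add_mul_I, ← hMM, ← hM]
  have hzne : z ≠ 0 := by
    intro h0
    exact hMne (by rw [← habs, h0, norm_zero])
  have hre : z.re = ρ - a * R 0 := by simp [hzdef]
  have him : z.im = s * I 0 := by simp [hzdef]
  have hcosτ : M * Real.cos (Complex.arg z) = ρ - a * R 0 := by
    rw [Complex.cos_arg hzne, hre, habs]
    field_simp
  have hsinτ : M * Real.sin (Complex.arg z) = s * I 0 := by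
    rw [Complex.sin_arg, him, habs]
    field_simp
  have hIoc := Complex.arg_mem_Ioc z
  -- the integrating factor u = exp(-∫ 2p₁ I)
  set h : ℝ → ℝ := fun τ => ∫ t in (0:ℝ)..τ, 2 * p₁ * I t with hhdef
  have hh' : ∀ τ, HasDerivAt h (2 * p₁ * I τ) τ := fun τ =>
    ((continuous_const.mul hIcont : Continuous fun t => 2 * p₁ * I t).integral_hasStrictDerivAt 0 τ).hasDerivAt
  set u : ℝ → ℝ := fun τ => Real.exp (-h τ) with hudef
  have hupos : ∀ τ, 0 < u τ := fun τ => Real.exp_pos _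
  have hu0 : u 0 = 1 := by simp [hudef, hhdef]
  have hu' : ∀ τ, HasDerivAt u (-(2 * p₁ * I τ) * u τ) τ := fun τ => by
    simpa [mul_comm] using ((hh' τ).neg).exp
  -- the sphere is invariant
  have hsph : ∀ τ, D τ ^ 2 + R τ ^ 2 + I τ ^ 2 = ρ ^ 2 := by
    have hS : ∀ x, HasDerivAt (fun τ => D τ ^ 2 + R τ ^ 2 + I τ ^ 2) 0 x := by
      intro x
      have h1 := (((hD x).pow 2).add ((hR x).pow 2)).add ((hI x).pow 2)
      refine HasDerivAt.congr_deriv h1 (Eq.symm ?_)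
      push_cast
      ring
    intro τ
    have := is_const_of_deriv_eq_zero (fun x => (hS x).differentiableAt)
      (fun x => (hS x).deriv) τ 0
    simpa [hsphere] using this
  -- D·u and (R - aρ)·u are constant
  have hDu : ∀ τ, D τ * u τ = D 0 := by
    have key : ∀ x, HasDerivAt (fun τ => D τ * u τ) 0 x := by
      intro x
      have h1 := (hD x).mul (hu' x)
      refine HasDerivAt.congr_deriv h1 (Eq.symm ?_)
      ring
    intro τ
    have := is_const_of_deriv_eq_zero (fun x => (key x).differentiableAt)
      (fun x => (key x).deriv) τ 0
    simpa [hu0] using this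
  have hRu : ∀ τ, (R τ - a * ρ) * u τ = R 0 - a * ρ := by
    have key : ∀ x, HasDerivAt (fun τ => (R τ - a * ρ) * u τ) 0 x := by
      intro x
      have h1 := ((hR x).sub_const (a * ρ)).mul (hu' x)
      refine HasDerivAt.congr_deriv h1 (Eq.symm ?_)
      linear_combination (2 * ρ * I x * u x) * hap
    intro τ
    have := is_const_of_deriv_eq_zero (fun x => (key x).differentiableAt)
      (fun x => (key x).deriv) τ 0
    simpa [hu0] using this
  -- second derivative of u : harmonic oscillator
  have hv' : ∀ x, HasDerivAt (fun τ => -(2 * p₁ * I τ) * u τ)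
      (-(4 * p₁ ^ 2 * ρ ^ 2 * (a ^ 2 - 1)) * u x + 4 * a * p₁ ^ 2 * ρ * (a * ρ - R 0)) x := by
    intro x
    have h1 := (((hI x).const_mul (2 * p₁)).neg).mul (hu' x)
    refine HasDerivAt.congr_deriv h1 (Eq.symm ?_)
    simp only [Pi.neg_apply]
    linear_combination (-(4 * p₁ ^ 2 * u x)) * hsph x + (4 * p₁ * ρ * R x * u x) * hap +
      (4 * a * p₁ ^ 2 * ρ) * hRu x
  set ω : ℝ := 2 * p₁ * ρ * s with hωdef
  have hωpos : 0 < ω := by positivity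
  have hωne : ω ≠ 0 := hωpos.ne'
  have hω2 : ω ^ 2 = 4 * p₁ ^ 2 * ρ ^ 2 * (a ^ 2 - 1) := by
    rw [hωdef]; linear_combination (4 * p₁ ^ 2 * ρ ^ 2) * hs2
  have hρs : ρ * s ≠ 0 := by positivity
  obtain ⟨c₀, hc₀'⟩ : ∃ x : ℝ, ρ * (a ^ 2 - 1) * x = a * (a * ρ - R 0) :=
    ⟨a * (a * ρ - R 0) / (ρ * (a ^ 2 - 1)), by field_simp⟩
  obtain ⟨A, hA'⟩ : ∃ x : ℝ, ρ * (a ^ 2 - 1) * x = a * R 0 - ρ :=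
    ⟨(a * R 0 - ρ) / (ρ * (a ^ 2 - 1)), by field_simp⟩
  obtain ⟨B, hB'⟩ : ∃ x : ℝ, ρ * s * x = -(I 0) :=
    ⟨-(I 0) / (ρ * s), by field_simp⟩
  set c : ℝ → ℝ := fun τ => c₀ + A * Real.cos (ω * τ) + B * Real.sin (ω * τ) with hcdef
  set c' : ℝ → ℝ := fun τ => -(A * ω) * Real.sin (ω * τ) + B * ω * Real.cos (ω * τ) with hc'def
  have hlin : ∀ x : ℝ, HasDerivAt (fun τ : ℝ => ω * τ) ω x := fun x => by
    simpa using (hasDerivAt_id x).const_mul ω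
  have hc' : ∀ x, HasDerivAt c (c' x) x := by
    intro x
    have h1 := ((hasDerivAt_const x c₀).add (((hlin x).cos).const_mul A)).add
      (((hlin x).sin).const_mul B)
    refine HasDerivAt.congr_deriv h1 (Eq.symm ?_)
    simp only [hc'def]; ring
  have hc₀K : c₀ * ω ^ 2 = 4 * a * p₁ ^ 2 * ρ * (a * ρ - R 0) := by
    apply mul_left_cancel₀ hden
    linear_combination ω ^ 2 * hc₀' + a * (a * ρ - R 0) * hω2
  have hc'' : ∀ x, HasDerivAt c' (-(4 * p₁ ^ 2 * ρ ^ 2 * (a ^ 2 - 1)) * c x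
      + 4 * a * p₁ ^ 2 * ρ * (a * ρ - R 0)) x := by
    intro x
    have h1 := (((hlin x).sin).const_mul (-(A * ω))).add (((hlin x).cos).const_mul (B * ω))
    refine HasDerivAt.congr_deriv h1 (Eq.symm ?_)
    simp only [hcdef]
    linear_combination (c₀ + A * Real.cos (ω * x) + B * Real.sin (ω * x)) * hω2 - hc₀K
  -- energy argument : u = c and u' = c'
  have hwclose : ∀ x, u x = c x ∧ -(2 * p₁ * I x) * u x = c' x := by
    have hw' : ∀ x, HasDerivAt (fun τ => u τ - c τ) ((fun τ => -(2 * p₁ * I τ) * u τ - c' τ) x) x :=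
      fun x => (hu' x).sub (hc' x)
    have hw'' : ∀ x, HasDerivAt (fun τ => -(2 * p₁ * I τ) * u τ - c' τ)
        (-(ω ^ 2) * ((fun τ => u τ - c τ) x)) x := by
      intro x
      have h1 := (hv' x).sub (hc'' x)
      refine HasDerivAt.congr_deriv h1 (Eq.symm ?_)
      linear_combination (c x - u x) * hω2
    have hc0 : c 0 = 1 := by
      have h2 : c 0 = c₀ + A := by simp [hcdef]
      rw [h2]
      apply mul_left_cancel₀ hden
      linear_combination hc₀' + hA'
    have hc'0 : c' 0 = -(2 * p₁ * I 0) := by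
      have h2 : c' 0 = B * ω := by simp [hc'def]
      rw [h2]
      apply mul_left_cancel₀ hρs
      linear_combination ω * hB' + (-(I 0)) * hωdef
    have hw0 : (fun τ => u τ - c τ) 0 = 0 := by simp only; rw [hc0, hu0]; ring
    have hw'0 : (fun τ => -(2 * p₁ * I τ) * u τ - c' τ) 0 = 0 := by
      simp only; rw [hc'0, hu0]; ring
    intro x
    obtain ⟨e1, e2⟩ := osc_zero ω hωpos _ _ hw' hw'' hw0 hw'0 x
    exact ⟨by linarith only [e1], by linarith only [e2]⟩
  have huform : ∀ τ, u τ = c₀ + A * Real.cos (ω * τ) + B * Real.sin (ω * τ) :=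
    fun τ => (hwclose τ).1
  have hvform : ∀ τ, -(2 * p₁ * I τ) * u τ
      = -(A * ω) * Real.sin (ω * τ) + B * ω * Real.cos (ω * τ) :=
    fun τ => (hwclose τ).2
  refine ⟨Complex.arg z, hIoc, ?_, ?_, ?_⟩
  · -- sign condition
    have hsin : Real.sin (Complex.arg z) = s * I 0 / M := by
      rw [eq_div_iff hMne]
      linear_combination hsinτ
    rcases lt_trichotomy (I 0) 0 with hI0 | hI0 | hI0
    · have hs1 : Real.sin (Complex.arg z) < 0 := by
        rw [hsin]
        exact div_neg_of_neg_of_pos (mul_neg_of_pos_of_neg hspos hI0) hMpos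
      have hτneg : Complex.arg z ≤ 0 := by
        by_contra hh
        push_neg at hh
        have h3 := Real.sin_nonneg_of_nonneg_of_le_pi hh.le hIoc.2
        linarith only [h3, hs1]
      have h4 := mul_nonneg (neg_nonneg.2 hτneg) (neg_nonneg.2 hI0.le)
      simpa using h4
    · rw [hI0, mul_zero]
    · have hs1 : 0 < Real.sin (Complex.arg z) := by
        rw [hsin]
        exact div_pos (mul_pos hspos hI0) hMpos
      have hτpos : 0 ≤ Complex.arg z := by
        by_contra hh
        push_neg at hh
        have h3 := Real.sin_nonpos_of_nonpos_of_neg_pi_le hh.le hIoc.1.le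
        linarith only [h3, hs1]
      exact mul_nonneg hτpos hI0.le
  · -- normalization at τ₀
    have hden2 : a * (a * ρ - R 0) - M * Real.cos (Complex.arg z) = (a ^ 2 - 1) * ρ := by
      linear_combination -hcosτ
    rw [hden2, div_self (by positivity)]
  · -- the explicit solution
    have key : ∀ τ, a * (a * ρ - R 0) - M * Real.cos (ω * τ - Complex.arg z)
        = ρ * (a ^ 2 - 1) * u τ := by
      intro τ
      rw [huform τ, Real.cos_sub]
      linear_combination -hc₀' - Real.cos (ω * τ) * hA' - Real.cos (ω * τ) * hcosτ
        - Real.sin (ω * τ) * hsinτ - Real.sin (ω * τ) * s * hB'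
        + ρ * B * Real.sin (ω * τ) * hs2
    have hfpos : ∀ τ, 0 < a * (a * ρ - R 0) - M * Real.cos (ω * τ - Complex.arg z) := by
      intro τ
      rw [key τ]
      exact mul_pos (by positivity) (hupos τ)
    have hfne : ∀ τ, a * (a * ρ - R 0) - M * Real.cos (ω * τ - Complex.arg z) ≠ 0 :=
      fun τ => (hfpos τ).ne'
    intro τ
    refine ⟨?_, ?_, ?_⟩
    · rw [eq_div_iff (hfne τ)]
      linear_combination D τ * key τ + ρ * (a ^ 2 - 1) * hDu τ
    · have h5 : (a ^ 2 - 1) * ρ * (R 0 - a * ρ)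
          / (a * (a * ρ - R 0) - M * Real.cos (ω * τ - Complex.arg z)) = R τ - a * ρ := by
        rw [div_eq_iff (hfne τ)]
        linear_combination (-(R τ - a * ρ)) * key τ - ρ * (a ^ 2 - 1) * hRu τ
      rw [h5]; ring
    · have h7 : (2 * p₁) * (-(ρ * s * M * Real.sin (ω * τ - Complex.arg z)))
          = (2 * p₁) * (I τ * (a * (a * ρ - R 0) - M * Real.cos (ω * τ - Complex.arg z))) := by
        rw [Real.sin_sub]
        linear_combination (-(2 * p₁ * I τ)) * key τ + (ρ * (a ^ 2 - 1)) * hvform τ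
          - ω * Real.sin (ω * τ) * hA' - ω * Real.sin (ω * τ) * hcosτ
          + ω * Real.cos (ω * τ) * s * hB' - ω * Real.cos (ω * τ) * ρ * B * hs2
          + ω * Real.cos (ω * τ) * hsinτ
          + M * Real.sin (ω * τ) * Real.cos (Complex.arg z) * hωdef
          - M * Real.cos (ω * τ) * Real.sin (Complex.arg z) * hωdef
      have h8 := mul_left_cancel₀ (show (2 : ℝ) * p₁ ≠ 0 by positivity) h7
      rw [eq_div_iff (hfne τ)]
      linarith only [h8]
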